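/- arXiv:quant-ph/0411110 — 5 statements merged into one kernel-verified Lean document; each statement's English description precedes it below -/
import Mathlib

section
/- Let B₁, B₂, B₃ be 3×3 unitary matrices with Tr(B_i† B_j) = 0 for all i ≠ j. Suppose {e₀, e₁, e₂} is an orthonormal basis of ℂ³ with B₂†B₁ e_i = ω^i e_i for each i, and {f₀, f₁, f₂} is an orthonormal basis with B₃†B₂ f_j = ω^j f_j for each j, where ω = e^{2πi/3}. Then the quantity |⟨e_i, f_j⟩|² depends only on (j − i) mod 3; that is, |⟨e_i, f_j⟩| = |⟨e_{i'}, f_{j'}⟩| whenever j − i ≡ j' − i' (mod 3). -/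
open Matrix

/-- `ω = e^{2πi/3}`, the primitive cube root of unity. -/
noncomputable def ω : ℂ := Complex.exp (2 * Real.pi * Complex.I / 3)

theorem stmt7_aux (w : ℂ) (hw2 : w ^ 2 + w + 1 = 0) (q : Fin 3 → Fin 3 → ℂ)
    (hr : ∀ i, q i 0 + q i 1 + q i 2 = 1)
    (hc : ∀ j, q 0 j + q 1 j + q 2 j = 1)
    (hs : q 0 0 + w * q 0 1 + w ^ 2 * q 0 2 + w * q 1 0 + w ^ 2 * q 1 1 + w ^ 3 * q 1 2
        + w ^ 2 * q 2 0 + w ^ 3 * q 2 1 + w ^ 4 * q 2 2 = 0)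
    (hs2 : q 0 0 + w ^ 2 * q 0 1 + w ^ 4 * q 0 2 + w ^ 2 * q 1 0 + w ^ 4 * q 1 1 + w ^ 6 * q 1 2
        + w ^ 4 * q 2 0 + w ^ 6 * q 2 1 + w ^ 8 * q 2 2 = 0) :
    ∀ i j, q i j = q 0 (j - i) := by
  have hr0 := hr 0; have hr1 := hr 1; have hr2 := hr 2
  have hc0 := hc 0; have hc1 := hc 1; have hc2 := hc 2
  have k1 : q 0 0 = q 1 1 := by
    linear_combination ((1/3:ℂ)) * hr0 + ((-1/3:ℂ)) * hr1 + ((1/3:ℂ)) * hc0 + ((-1/3:ℂ)) * hc1 + ((1/9:ℂ) + (-1/9:ℂ)*w) * hs + ((2/9:ℂ) + (1/9:ℂ)*w) * hs2 + (((-1/9:ℂ)*w) * q 0 1 + ((-1/3:ℂ) + (1/3:ℂ)*w + (-1/9:ℂ)*w^2 + (-1/9:ℂ)*w^3) * q 0 2 + ((-1/9:ℂ)*w) * q 1 0 + ((-1/3:ℂ) + (1/3:ℂ)*w + (-1/9:ℂ)*w^2 + (-1/9:ℂ)*w^3) * q 1 1 + ((1/3:ℂ) + (-1/3:ℂ)*w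 + (2/9:ℂ)*w^3 + (-1/9:ℂ)*w^4 + (-1/9:ℂ)*w^5) * q 1 2 + ((-1/3:ℂ) + (1/3:ℂ)*w + (-1/9:ℂ)*w^2 + (-1/9:ℂ)*w^3) * q 2 0 + ((1/3:ℂ) + (-1/3:ℂ)*w + (2/9:ℂ)*w^3 + (-1/9:ℂ)*w^4 + (-1/9:ℂ)*w^5) * q 2 1 + ((-1/9:ℂ)*w^4 + (2/9:ℂ)*w^5 + (-1/9:ℂ)*w^6 + (-1/9:ℂ)*w^7) * q 2 2) * hw2
  have k2 : q 1 1 = q 2 2 := by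
    linear_combination ((-1/3:ℂ)) * hr0 + ((-2/3:ℂ)) * hr2 + ((1/3:ℂ)) * hc0 + ((2/3:ℂ)) * hc1 + ((1/9:ℂ) + (2/9:ℂ)*w) * hs + ((-1/9:ℂ) + (-2/9:ℂ)*w) * hs2 + (((-1/3:ℂ) + (2/9:ℂ)*w) * q 0 1 + ((1/3:ℂ) + (-1/3:ℂ)*w + (-1/9:ℂ)*w^2 + (2/9:ℂ)*w^3) * q 0 2 + ((-1/3:ℂ) + (2/9:ℂ)*w) * q 1 0 + ((1/3:ℂ) + (-1/3:ℂ)*w + (-1/9:ℂ)*w^2 + (2/9:ℂ)*w^3) * q 1 1 + ((-1/9:ℂ)*w^3 + (-1/9:ℂ)*w^4 + (2/9:ℂ)*w^5) * q 1 2 + ((1/3:ℂ) + (-1/3:ℂ)*w + (-1/9:ℂ)*w^2 + (2/9:ℂ)*w^3) * q 2 0 + ((-1/9:ℂ)*w^3 + (-1/9:ℂ)*w^4 + (2/9:ℂ)*w^5) * q 2 1 + ((-1/3:ℂ) + (1/3:ℂ)*w + (-1/3:ℂ)*w^3 + (2/9:ℂ)*w^4 + (-1/9:ℂ)*w^5 +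 (-1/9:ℂ)*w^6 + (2/9:ℂ)*w^7) * q 2 2) * hw2
  have k3 : q 0 1 = q 1 2 := by
    linear_combination ((-2/3:ℂ)) * hr1 + ((-1/3:ℂ)) * hr2 + ((1/3:ℂ)) * hc0 + ((2/3:ℂ)) * hc1 + ((-2/9:ℂ) + (-1/9:ℂ)*w) * hs + ((-1/9:ℂ) + (1/9:ℂ)*w) * hs2 + (((1/3:ℂ) + (-1/9:ℂ)*w) * q 0 1 + ((2/9:ℂ)*w^2 + (-1/9:ℂ)*w^3) * q 0 2 + ((1/3:ℂ) + (-1/9:ℂ)*w) * q 1 0 + ((2/9:ℂ)*w^2 + (-1/9:ℂ)*w^3) * q 1 1 + ((-1/3:ℂ) + (1/3:ℂ)*w + (-1/9:ℂ)*w^3 + (2/9:ℂ)*w^4 + (-1/9:ℂ)*w^5) * q 1 2 + ((2/9:ℂ)*w^2 + (-1/9:ℂ)*w^3) * q 2 0 + ((-1/3:ℂ) + (1/3:ℂ)*w + (-1/9:ℂ)*w^3 + (2/9:ℂ)*w^4 + (-1/9:ℂ)*w^5) * q 2 1 + ((1/3:ℂ) + (-1/3:ℂ)*w + (1/3:ℂ)*w^3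 + (-1/9:ℂ)*w^4 + (-1/9:ℂ)*w^5 + (2/9:ℂ)*w^6 + (-1/9:ℂ)*w^7) * q 2 2) * hw2
  have k4 : q 1 2 = q 2 0 := by
    linear_combination ((1/3:ℂ)) * hr0 + ((2/3:ℂ)) * hr1 + ((-2/3:ℂ)) * hc0 + ((-1/3:ℂ)) * hc1 + ((1/9:ℂ) + (-1/9:ℂ)*w) * hs + ((2/9:ℂ) + (1/9:ℂ)*w) * hs2 + (((-1/9:ℂ)*w) * q 0 1 + ((-1/3:ℂ) + (1/3:ℂ)*w + (-1/9:ℂ)*w^2 + (-1/9:ℂ)*w^3) * q 0 2 + ((-1/9:ℂ)*w) * q 1 0 + ((-1/3:ℂ) + (1/3:ℂ)*w + (-1/9:ℂ)*w^2 + (-1/9:ℂ)*w^3) * q 1 1 + ((1/3:ℂ) + (-1/3:ℂ)*w + (2/9:ℂ)*w^3 + (-1/9:ℂ)*w^4 + (-1/9:ℂ)*w^5) * q 1 2 + ((-1/3:ℂ) + (1/3:ℂ)*w + (-1/9:ℂ)*w^2 + (-1/9:ℂ)*w^3) * q 2 0 + ((1/3:ℂ) + (-1/3:ℂ)*w + (2/9:ℂ)*w^3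 + (-1/9:ℂ)*w^4 + (-1/9:ℂ)*w^5) * q 2 1 + ((-1/9:ℂ)*w^4 + (2/9:ℂ)*w^5 + (-1/9:ℂ)*w^6 + (-1/9:ℂ)*w^7) * q 2 2) * hw2
  have k5 : q 0 2 = q 1 0 := by
    linear_combination ((2/3:ℂ)) * hr0 + ((1/3:ℂ)) * hr2 + ((-2/3:ℂ)) * hc0 + ((-1/3:ℂ)) * hc1 + ((1/9:ℂ) + (2/9:ℂ)*w) * hs + ((-1/9:ℂ) + (-2/9:ℂ)*w) * hs2 + (((-1/3:ℂ) + (2/9:ℂ)*w) * q 0 1 + ((1/3:ℂ) + (-1/3:ℂ)*w + (-1/9:ℂ)*w^2 + (2/9:ℂ)*w^3) * q 0 2 + ((-1/3:ℂ) + (2/9:ℂ)*w) * q 1 0 + ((1/3:ℂ) + (-1/3:ℂ)*w + (-1/9:ℂ)*w^2 + (2/9:ℂ)*w^3) * q 1 1 + ((-1/9:ℂ)*w^3 + (-1/9:ℂ)*w^4 + (2/9:ℂ)*w^5) * q 1 2 + ((1/3:ℂ) + (-1/3:ℂ)*w + (-1/9:ℂ)*w^2 + (2/9:ℂ)*w^3)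 * q 2 0 + ((-1/9:ℂ)*w^3 + (-1/9:ℂ)*w^4 + (2/9:ℂ)*w^5) * q 2 1 + ((-1/3:ℂ) + (1/3:ℂ)*w + (-1/3:ℂ)*w^3 + (2/9:ℂ)*w^4 + (-1/9:ℂ)*w^5 + (-1/9:ℂ)*w^6 + (2/9:ℂ)*w^7) * q 2 2) * hw2
  have k6 : q 1 0 = q 2 1 := by
    linear_combination ((1/3:ℂ)) * hr1 + ((-1/3:ℂ)) * hr2 + ((1/3:ℂ)) * hc0 + ((-1/3:ℂ)) * hc1 + ((-2/9:ℂ) + (-1/9:ℂ)*w) * hs + ((-1/9:ℂ) + (1/9:ℂ)*w) * hs2 + (((1/3:ℂ) + (-1/9:ℂ)*w) * q 0 1 + ((2/9:ℂ)*w^2 + (-1/9:ℂ)*w^3) * q 0 2 + ((1/3:ℂ) + (-1/9:ℂ)*w) * q 1 0 + ((2/9:ℂ)*w^2 + (-1/9:ℂ)*w^3) * q 1 1 + ((-1/3:ℂ) + (1/3:ℂ)*w + (-1/9:ℂ)*w^3 + (2/9:ℂ)*w^4 + (-1/9:ℂ)*w^5) * q 1 2 + ((2/9:ℂ)*w^2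 + (-1/9:ℂ)*w^3) * q 2 0 + ((-1/3:ℂ) + (1/3:ℂ)*w + (-1/9:ℂ)*w^3 + (2/9:ℂ)*w^4 + (-1/9:ℂ)*w^5) * q 2 1 + ((1/3:ℂ) + (-1/3:ℂ)*w + (1/3:ℂ)*w^3 + (-1/9:ℂ)*w^4 + (-1/9:ℂ)*w^5 + (2/9:ℂ)*w^6 + (-1/9:ℂ)*w^7) * q 2 2) * hw2
  intro i j
  fin_cases i <;> fin_cases j
  exacts [rfl, rfl, rfl, k5.symm, k1.symm, k3.symm, (k3.trans k4).symm,
    (k5.trans k6).symm, (k1.trans k2).symm]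

/-- Let `B₁, B₂, B₃` (indexed `B 0, B 1, B 2`) be `3 × 3` unitaries with
`Tr(Bᵢ† Bⱼ) = 0` for `i ≠ j`. If `{eᵢ}` is an orthonormal basis with
`B₂†B₁ eᵢ = ωⁱ eᵢ` and `{fⱼ}` an orthonormal basis with `B₃†B₂ fⱼ = ωʲ fⱼ`,
then `|⟨eᵢ, fⱼ⟩|` depends only on `(j − i) mod 3`. -/
theorem stmt_7 (B : Fin 3 → Matrix (Fin 3) (Fin 3) ℂ)
    (hB : ∀ i, B i ∈ Matrix.unitaryGroup (Fin 3) ℂ)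
    (horth : ∀ i j, i ≠ j → ((B i)ᴴ * B j).trace = 0)
    (e f : Fin 3 → (Fin 3 → ℂ))
    (he : ∀ i j, ∑ t, star (e i t) * e j t = if i = j then 1 else 0)
    (hf : ∀ i j, ∑ t, star (f i t) * f j t = if i = j then 1 else 0)
    (heig : ∀ i, ((B 1)ᴴ * B 0).mulVec (e i) = ω ^ (i : ℕ) • e i)
    (hfeig : ∀ j, ((B 2)ᴴ * B 1).mulVec (f j) = ω ^ (j : ℕ) • f j) :
    ∀ i j i' j' : Fin 3, j - i = j' - i' →
      ‖∑ t, star (e i t) * f j t‖ =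
        ‖∑ t, star (e i' t) * f j' t‖ := by
  -- basic facts about ω
  have hω3 : ω ^ 3 = 1 := by
    rw [ω, ← Complex.exp_nat_mul]
    rw [show ((3 : ℕ) : ℂ) * (2 * Real.pi * Complex.I / 3) = 2 * Real.pi * Complex.I by
      push_cast; ring]
    exact Complex.exp_two_pi_mul_I
  have hωne : ω ≠ 1 := by
    intro hone
    obtain ⟨n, hn⟩ := Complex.exp_eq_one_iff.mp
      (hone : Complex.exp (2 * Real.pi * Complex.I / 3) = 1)
    have h2 : (2 * (Real.pi : ℂ) * Complex.I) ≠ 0 := by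
      simp [Real.pi_ne_zero, Complex.I_ne_zero, Complex.ofReal_ne_zero]
    have h3 : (2 * (Real.pi : ℂ) * Complex.I) * ((n : ℂ) - 1/3) = 0 := by
      linear_combination (-1 : ℂ) * hn
    have h4 : (n : ℂ) - 1/3 = 0 := (mul_eq_zero.mp h3).resolve_left h2
    have h5 : ((3 * n - 1 : ℤ) : ℂ) = 0 := by push_cast; linear_combination 3 * h4
    have h6 : (3 * n - 1 : ℤ) = 0 := by exact_mod_cast h5
    omega
  have hω2 : ω ^ 2 + ω + 1 = 0 := by
    have hne : ω - 1 ≠ 0 := sub_ne_zero.mpr hωne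
    have hmul : (ω - 1) * (ω ^ 2 + ω + 1) = 0 := by linear_combination hω3
    exact (mul_eq_zero.mp hmul).resolve_left hne
  have hωs : (starRingEnd ℂ) ω = ω ^ 2 := by
    have h1 : (starRingEnd ℂ) ω * ω = 1 := by
      rw [ω, ← Complex.exp_conj, ← Complex.exp_add]
      rw [show (starRingEnd ℂ) (2 * ↑Real.pi * Complex.I / 3) + 2 * ↑Real.pi * Complex.I / 3
          = 0 by simp [map_div₀, _root_.map_mul, map_ofNat, Complex.conj_ofReal, Complex.conj_I]; try ring]
      exact Complex.exp_zero
    calc (starRingEnd ℂ) ω = (starRingEnd ℂ) ω * (ω * ω ^ 2) := by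
          rw [show ω * ω ^ 2 = ω ^ 3 by ring, hω3, mul_one]
      _ = ((starRingEnd ℂ) ω * ω) * ω ^ 2 := by ring
      _ = ω ^ 2 := by rw [h1, one_mul]
  -- matrices
  set U : Matrix (Fin 3) (Fin 3) ℂ := (B 1)ᴴ * B 0 with hUdef
  set V : Matrix (Fin 3) (Fin 3) ℂ := (B 2)ᴴ * B 1 with hVdef
  set E : Matrix (Fin 3) (Fin 3) ℂ := Matrix.of fun t i => e i t with hEdef
  set F : Matrix (Fin 3) (Fin 3) ℂ := Matrix.of fun t j => f j t with hFdef
  set D : Matrix (Fin 3) (Fin 3) ℂ := Matrix.diagonal fun i : Fin 3 => ω ^ (i : ℕ) with hDdef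
  have hE : Eᴴ * E = 1 := by
    ext i j
    simpa [hEdef, Matrix.mul_apply, Matrix.conjTranspose_apply, Matrix.one_apply] using he i j
  have hF : Fᴴ * F = 1 := by
    ext i j
    simpa [hFdef, Matrix.mul_apply, Matrix.conjTranspose_apply, Matrix.one_apply] using hf i j
  have hE' : E * Eᴴ = 1 := mul_eq_one_comm.mp hE
  have hF' : F * Fᴴ = 1 := mul_eq_one_comm.mp hF
  have hUE : U * E = E * D := by
    ext t i
    have h := congrFun (heig i) t
    simp only [Matrix.mulVec, dotProduct, Pi.smul_apply, smul_eq_mul] at h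
    rw [Matrix.mul_diagonal]
    simp only [Matrix.mul_apply, hEdef, Matrix.of_apply]
    rw [h]; ring
  have hVF : V * F = F * D := by
    ext t j
    have h := congrFun (hfeig j) t
    simp only [Matrix.mulVec, dotProduct, Pi.smul_apply, smul_eq_mul] at h
    rw [Matrix.mul_diagonal]
    simp only [Matrix.mul_apply, hFdef, Matrix.of_apply]
    rw [h]; ring
  have hU : U = E * D * Eᴴ := by
    have h1 : (U * E) * Eᴴ = U * (E * Eᴴ) := Matrix.mul_assoc U E Eᴴ
    rw [hUE, hE', Matrix.mul_one] at h1
    exact h1.symm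
  have hV : V = F * D * Fᴴ := by
    have h1 : (V * F) * Fᴴ = V * (F * Fᴴ) := Matrix.mul_assoc V F Fᴴ
    rw [hVF, hF', Matrix.mul_one] at h1
    exact h1.symm
  have hB1 : B 1 * (B 1)ᴴ = 1 := by
    simpa [Matrix.star_eq_conjTranspose] using (Matrix.mem_unitaryGroup_iff.mp (hB 1))
  have htr0 : (V * U).trace = 0 := by
    have hVU : V * U = (B 2)ᴴ * B 0 := by
      rw [hVdef, hUdef, Matrix.mul_assoc, ← Matrix.mul_assoc (B 1), hB1, Matrix.one_mul]
    rw [hVU]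
    exact horth 2 0 (by decide)
  set G : Matrix (Fin 3) (Fin 3) ℂ := Fᴴ * E with hGdef
  have hG1 : Gᴴ * G = 1 := by
    have h : Gᴴ * G = Eᴴ * (F * Fᴴ) * E := by
      rw [hGdef, Matrix.conjTranspose_mul, Matrix.conjTranspose_conjTranspose]
      simp only [Matrix.mul_assoc]
    rw [h, hF', Matrix.mul_one, hE]
  have hG2 : G * Gᴴ = 1 := mul_eq_one_comm.mp hG1
  have htr : (D * G * D * Gᴴ).trace = 0 := by
    have hX : D * G * D * Gᴴ = (D * Fᴴ * E * D * Eᴴ) * F := by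
      rw [hGdef, Matrix.conjTranspose_mul, Matrix.conjTranspose_conjTranspose]
      simp only [Matrix.mul_assoc]
    have hY : F * D * Fᴴ * (E * D * Eᴴ) = F * (D * Fᴴ * E * D * Eᴴ) := by
      simp only [Matrix.mul_assoc]
    rw [hX, ← Matrix.trace_mul_comm, ← hY, ← hU, ← hV, htr0]
  -- scalar consequences
  set q : Fin 3 → Fin 3 → ℂ := fun i j => star (G j i) * G j i with hqdef
  have hrow : ∀ i, q i 0 + q i 1 + q i 2 = 1 := by
    intro i
    have h : (Gᴴ * G) i i = (1 : Matrix (Fin 3) (Fin 3) ℂ) i i := by rw [hG1]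
    simpa [Matrix.mul_apply, Matrix.conjTranspose_apply, Matrix.one_apply,
      Fin.sum_univ_three, hqdef] using h
  have hcol : ∀ j, q 0 j + q 1 j + q 2 j = 1 := by
    intro j
    have h : (G * Gᴴ) j j = (1 : Matrix (Fin 3) (Fin 3) ℂ) j j := by rw [hG2]
    simp [Matrix.mul_apply, Matrix.conjTranspose_apply, Matrix.one_apply,
      Fin.sum_univ_three, hqdef] at h ⊢
    linear_combination h
  have hsum : q 0 0 + ω * q 0 1 + ω ^ 2 * q 0 2 + ω * q 1 0 + ω ^ 2 * q 1 1 + ω ^ 3 * q 1 2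
      + ω ^ 2 * q 2 0 + ω ^ 3 * q 2 1 + ω ^ 4 * q 2 2 = 0 := by
    have h := htr
    simp only [Matrix.trace, Matrix.diag, Matrix.mul_apply, Matrix.conjTranspose_apply,
      hDdef, Matrix.diagonal_apply, Fin.sum_univ_three] at h
    simp only [hqdef]
    simp at h
    simp only [starRingEnd_apply] at h
    linear_combination h
  have hsum2 : q 0 0 + ω ^ 2 * q 0 1 + ω ^ 4 * q 0 2 + ω ^ 2 * q 1 0 + ω ^ 4 * q 1 1
      + ω ^ 6 * q 1 2 + ω ^ 4 * q 2 0 + ω ^ 6 * q 2 1 + ω ^ 8 * q 2 2 = 0 := by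
    have h := congrArg (starRingEnd ℂ) hsum
    simp only [map_add, _root_.map_mul, map_pow, hωs, map_zero] at h
    have hqq : ∀ i j : Fin 3, (starRingEnd ℂ) (q i j) = q i j := by
      intro i j
      simp [hqdef, mul_comm]
    simp only [hqq] at h
    try simp only [starRingEnd_apply] at h
    linear_combination h
  have key := stmt7_aux ω hω2 q hrow hcol hsum hsum2
  -- relate q to the inner products in the goal
  have hqn : ∀ i j, q i j = ((Complex.normSq (∑ t, star (e i t) * f j t) : ℝ) : ℂ) := by
    intro i j
    have hstar : (starRingEnd ℂ) (∑ t, star (e i t) * f j t) = G j i := by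
      rw [map_sum]
      rw [show G j i = ∑ t, star (f j t) * e i t by
        simp [hGdef, Matrix.mul_apply, Matrix.conjTranspose_apply, hFdef, hEdef]]
      refine Finset.sum_congr rfl fun t _ => ?_
      simp [star_mul', star_star, mul_comm]
    have hthis : q i j = (∑ t, star (e i t) * f j t) * (starRingEnd ℂ) (∑ t, star (e i t) * f j t) := by
      simp only [hqdef]
      rw [← hstar]
      simp only [starRingEnd_apply, star_star]
    rw [hthis, Complex.mul_conj]
  intro i j i' j' h
  have hq1 : q i j = q i' j' := by
    rw [key i j, key i' j', h]
  rw [hqn i j, hqn i' j'] at hq1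
  have hq2 : Complex.normSq (∑ t, star (e i t) * f j t)
      = Complex.normSq (∑ t, star (e i' t) * f j' t) := by exact_mod_cast hq1
  rw [Complex.norm_def, Complex.norm_def, hq2]
end

section
/- Let V be a 3×3 unitary matrix such that |V_{ij}| depends only on (j − i) mod 3, i.e., there exist nonnegative reals r₀, r₁, r₂ with |V_{ij}| = r_{(j−i) mod 3} for all i, j. Then there exist diagonal unitary matrices U₁, U₂ and complex numbers a, b, c such that U₁ V U₂† has (i,j) entry equal to a when j − i ≡ 0 (mod 3), c when j − i ≡ 1 (mod 3), and b when j − i ≡ 2 (mod 3); in other words, V can be brought to circulant form by adjusting the phases of its rows and columns. -/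
open Matrix

private lemma unimod {z : ℂ} (h : ‖z‖ = 1) : z * (starRingEnd ℂ) z = 1 := by
  rw [Complex.mul_conj, ← Complex.sq_norm, h]; norm_num

private lemma diag_mem (d : Fin 3 → ℂ) (h : ∀ i, ‖d i‖ = 1) :
    Matrix.diagonal d ∈ Matrix.unitaryGroup (Fin 3) ℂ := by
  rw [Matrix.mem_unitaryGroup_iff, Matrix.star_eq_conjTranspose, Matrix.diagonal_conjTranspose,
    Matrix.diagonal_mul_diagonal]
  ext i j
  by_cases hij : i = j
  · subst hij
    simp only [Matrix.diagonal_apply_eq, Matrix.one_apply_eq, Pi.star_apply]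
    exact unimod (h i)
  · rw [Matrix.diagonal_apply_ne _ hij, Matrix.one_apply_ne hij]

private lemma tri_apply (d e : Fin 3 → ℂ) (M : Matrix (Fin 3) (Fin 3) ℂ) (i j : Fin 3) :
    (Matrix.diagonal d * M * (Matrix.diagonal e)ᴴ) i j = d i * M i j * (starRingEnd ℂ) (e j) := by
  rw [Matrix.diagonal_conjTranspose, Matrix.mul_diagonal, Matrix.diagonal_mul, Pi.star_apply]
  rfl

private lemma aux_perm (V : Matrix (Fin 3) (Fin 3) ℂ) (k : Fin 3)
    (h0 : ∀ i j, j - i ≠ k → V i j = 0)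
    (h1 : ∀ i, ‖V i (i + k)‖ = 1) :
    ∃ U₁ U₂ : Matrix (Fin 3) (Fin 3) ℂ, ∃ a b c : ℂ,
      U₁.IsDiag ∧ U₁ ∈ Matrix.unitaryGroup (Fin 3) ℂ ∧
      U₂.IsDiag ∧ U₂ ∈ Matrix.unitaryGroup (Fin 3) ℂ ∧
      ∀ i j, (U₁ * V * U₂ᴴ) i j =
        if j - i = 0 then a else if j - i = 1 then c else b := by
  refine ⟨Matrix.diagonal (fun i => (starRingEnd ℂ) (V i (i + k))), 1,
    if k = 0 then 1 else 0, if k = 2 then 1 else 0, if k = 1 then 1 else 0,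
    Matrix.isDiag_diagonal _, diag_mem _ (fun i => by rw [Complex.norm_conj]; exact h1 i),
    Matrix.isDiag_one, Submonoid.one_mem _, ?_⟩
  intro i j
  have hent : (Matrix.diagonal (fun i => (starRingEnd ℂ) (V i (i + k))) * V * (1 : Matrix (Fin 3) (Fin 3) ℂ)ᴴ) i j
      = (starRingEnd ℂ) (V i (i + k)) * V i j := by
    rw [Matrix.conjTranspose_one, Matrix.mul_one, Matrix.diagonal_mul]
  rw [hent]
  by_cases hk : j - i = k
  · have hj : j = i + k := by rw [← hk]; abel
    rw [hj, mul_comm, unimod (h1 i)]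
    simp only [add_sub_cancel_left]
    fin_cases k <;> simp [Fin.ext_iff]
  · rw [h0 i j hk, mul_zero]
    revert hk
    generalize j - i = d
    intro hk
    fin_cases d <;> fin_cases k <;> simp_all

/-- A `3 × 3` unitary matrix `V` with `|V_{ij}|` depending only on `(j − i) mod 3`
can be brought to circulant form by adjusting the phases of rows and columns:
there are diagonal unitaries `U₁, U₂` and complex numbers `a, b, c` such that
`U₁ V U₂†` has entry `a` when `j − i ≡ 0`, `c` when `j − i ≡ 1`, and `b` when
`j − i ≡ 2 (mod 3)`. -/
theorem stmt_8 (V : Matrix (Fin 3) (Fin 3) ℂ)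
    (hV : V ∈ Matrix.unitaryGroup (Fin 3) ℂ)
    (r : Fin 3 → ℝ) (hr : ∀ i, 0 ≤ r i)
    (hmod : ∀ i j, ‖V i j‖ = r (j - i)) :
    ∃ U₁ U₂ : Matrix (Fin 3) (Fin 3) ℂ, ∃ a b c : ℂ,
      U₁.IsDiag ∧ U₁ ∈ Matrix.unitaryGroup (Fin 3) ℂ ∧
      U₂.IsDiag ∧ U₂ ∈ Matrix.unitaryGroup (Fin 3) ℂ ∧
      ∀ i j, (U₁ * V * U₂ᴴ) i j =
        if j - i = 0 then a else if j - i = 1 then c else b := by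
  have key : ∀ i j, V i j * (starRingEnd ℂ) (V i j) = (((r (j - i) : ℝ) : ℂ))^2 := by
    intro i j
    rw [Complex.mul_conj, ← Complex.sq_norm, hmod]
    push_cast; ring
  have hVV : V * Vᴴ = 1 := by
    have h := Matrix.mem_unitaryGroup_iff.mp hV
    rwa [Matrix.star_eq_conjTranspose] at h
  have hnorm : r 0 ^ 2 + r 1 ^ 2 + r 2 ^ 2 = 1 := by
    have h : (V * Vᴴ) 0 0 = (1 : Matrix (Fin 3) (Fin 3) ℂ) 0 0 := by rw [hVV]
    simp only [Matrix.mul_apply, Fin.sum_univ_three, Matrix.conjTranspose_apply,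
      Matrix.one_apply_eq] at h
    simp only [show ∀ z : ℂ, star z = (starRingEnd ℂ) z from fun z => rfl] at h
    rw [key 0 0, key 0 1, key 0 2] at h
    simp only [sub_zero, sub_self] at h
    exact_mod_cast h
  have hvz : ∀ i j, r (j - i) = 0 → V i j = 0 := by
    intro i j h
    have := hmod i j
    rw [h] at this
    exact norm_eq_zero.mp this
  have hzr : ∀ i j, V i j = 0 → r (j - i) = 0 := by
    intro i j h
    have := hmod i j
    rwa [h, norm_zero, eq_comm] at this
  by_cases hA : 0 < r 0 ∧ 0 < r 1 ∧ 0 < r 2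
  · obtain ⟨h0p, h1p, h2p⟩ := hA
    have hrpos : ∀ k, 0 < r k := by
      intro k; fin_cases k <;> assumption
    have hR : ∀ k : Fin 3, ((r k : ℝ) : ℂ) ≠ 0 := fun k => by
      exact_mod_cast (hrpos k).ne'
    set p : Fin 3 → ℂ :=
      fun i => (V 0 0 * (starRingEnd ℂ) (V i 0)) / (((r 0 : ℝ) : ℂ) * ((r (-i) : ℝ) : ℂ))
      with hpd
    set q : Fin 3 → ℂ := fun j => V 0 j / ((r j : ℝ) : ℂ) with hqd
    have hpu : ∀ i, ‖p i‖ = 1 := by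
      intro i
      simp only [hpd, norm_div, norm_mul, Complex.norm_conj, Complex.norm_real, Real.norm_eq_abs, hmod,
        sub_self, zero_sub]
      rw [abs_of_pos (hrpos 0), abs_of_pos (hrpos (-i)),
        div_self (ne_of_gt (mul_pos (hrpos 0) (hrpos (-i))))]
    have hqu : ∀ j, ‖q j‖ = 1 := by
      intro j
      simp only [hqd, norm_div, Complex.norm_real, Real.norm_eq_abs, hmod, sub_zero]
      rw [abs_of_pos (hrpos j), div_self (ne_of_gt (hrpos j))]
    set W : Matrix (Fin 3) (Fin 3) ℂ := Matrix.diagonal p * V * (Matrix.diagonal q)ᴴ with hWdef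
    have hWapp : ∀ i j, W i j = p i * V i j * (starRingEnd ℂ) (q j) := by
      intro i j; rw [hWdef, tri_apply]
    have hWu : W ∈ Matrix.unitaryGroup (Fin 3) ℂ := by
      rw [hWdef]
      refine mul_mem (mul_mem (diag_mem p hpu) hV) ?_
      rw [← Matrix.star_eq_conjTranspose]
      exact Unitary.star_mem (diag_mem q hqu)
    have habsW : ∀ i j, ‖W i j‖ = r (j - i) := by
      intro i j
      rw [hWapp, norm_mul, norm_mul, Complex.norm_conj, hpu, hqu, hmod, one_mul,
        mul_one]
    have hW0 : ∀ j, W 0 j = ((r j : ℝ) : ℂ) := by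
      intro j
      have k1 : V 0 0 * (starRingEnd ℂ) (V 0 0) = (((r 0 : ℝ)) : ℂ) ^ 2 := by simpa using key 0 0
      have k2 : V 0 j * (starRingEnd ℂ) (V 0 j) = (((r j : ℝ)) : ℂ) ^ 2 := by simpa using key 0 j
      have d1 := hR 0
      have d2 := hR j
      rw [hWapp]
      simp only [hpd, hqd, neg_zero]
      rw [map_div₀, Complex.conj_ofReal]
      field_simp
      linear_combination (V 0 j * (starRingEnd ℂ) (V 0 j)) * k1 + (((r 0 : ℝ)) : ℂ) ^ 2 * k2
    have hWi0 : ∀ i, W i 0 = ((r (-i) : ℝ) : ℂ) := by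
      intro i
      have k1 : V 0 0 * (starRingEnd ℂ) (V 0 0) = (((r 0 : ℝ)) : ℂ) ^ 2 := by simpa using key 0 0
      have k2 : V i 0 * (starRingEnd ℂ) (V i 0) = (((r (-i) : ℝ)) : ℂ) ^ 2 := by
        simpa using key i 0
      have d1 := hR 0
      have d2 := hR (-i)
      rw [hWapp]
      simp only [hpd, hqd]
      rw [map_div₀, Complex.conj_ofReal]
      field_simp
      linear_combination (V i 0 * (starRingEnd ℂ) (V i 0)) * k1 + (((r 0 : ℝ)) : ℂ) ^ 2 * k2
    have hWW : W * Wᴴ = 1 := by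
      have h := Matrix.mem_unitaryGroup_iff.mp hWu
      rwa [Matrix.star_eq_conjTranspose] at h
    have hWW' : Wᴴ * W = 1 := by
      have h := Matrix.mem_unitaryGroup_iff'.mp hWu
      rwa [Matrix.star_eq_conjTranspose] at h
    have w00 : W 0 0 = ((r 0 : ℝ) : ℂ) := hW0 0
    have w01 : W 0 1 = ((r 1 : ℝ) : ℂ) := hW0 1
    have w02 : W 0 2 = ((r 2 : ℝ) : ℂ) := hW0 2
    have w10 : W 1 0 = ((r 2 : ℝ) : ℂ) := by
      simpa [show -(1 : Fin 3) = 2 by decide] using hWi0 1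
    have w20 : W 2 0 = ((r 1 : ℝ) : ℂ) := by
      simpa [show -(2 : Fin 3) = 1 by decide] using hWi0 2
    have E1 : W 1 0 * (starRingEnd ℂ) (W 0 0) + W 1 1 * (starRingEnd ℂ) (W 0 1)
        + W 1 2 * (starRingEnd ℂ) (W 0 2) = 0 := by
      have h : (W * Wᴴ) 1 0 = (1 : Matrix (Fin 3) (Fin 3) ℂ) 1 0 := by rw [hWW]
      simp only [Matrix.mul_apply, Fin.sum_univ_three, Matrix.conjTranspose_apply] at h
      simp only [show ∀ z : ℂ, star z = (starRingEnd ℂ) z from fun z => rfl] at h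
      rwa [Matrix.one_apply_ne (by decide)] at h
    have E2 : (starRingEnd ℂ) (W 0 0) * W 0 1 + (starRingEnd ℂ) (W 1 0) * W 1 1
        + (starRingEnd ℂ) (W 2 0) * W 2 1 = 0 := by
      have h : (Wᴴ * W) 0 1 = (1 : Matrix (Fin 3) (Fin 3) ℂ) 0 1 := by rw [hWW']
      simp only [Matrix.mul_apply, Fin.sum_univ_three, Matrix.conjTranspose_apply] at h
      simp only [show ∀ z : ℂ, star z = (starRingEnd ℂ) z from fun z => rfl] at h
      rwa [Matrix.one_apply_ne (by decide)] at h
    have E3 : W 2 0 * (starRingEnd ℂ) (W 0 0) + W 2 1 * (starRingEnd ℂ) (W 0 1)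
        + W 2 2 * (starRingEnd ℂ) (W 0 2) = 0 := by
      have h : (W * Wᴴ) 2 0 = (1 : Matrix (Fin 3) (Fin 3) ℂ) 2 0 := by rw [hWW]
      simp only [Matrix.mul_apply, Fin.sum_univ_three, Matrix.conjTranspose_apply] at h
      simp only [show ∀ z : ℂ, star z = (starRingEnd ℂ) z from fun z => rfl] at h
      rwa [Matrix.one_apply_ne (by decide)] at h
    rw [w00, w01, w02, w10, Complex.conj_ofReal, Complex.conj_ofReal, Complex.conj_ofReal] at E1
    rw [w00, w01, w02, w20, Complex.conj_ofReal, Complex.conj_ofReal, Complex.conj_ofReal] at E3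
    rw [w00, w10, w20, Complex.conj_ofReal, Complex.conj_ofReal, Complex.conj_ofReal, w01] at E2
    set x := W 1 1 with hxd
    set y := W 1 2 with hyd
    set z := W 2 1 with hzd
    set wv := W 2 2 with hwd
    have habsx : ‖x‖ = r 0 := by simpa using habsW 1 1
    have habsy : ‖y‖ = r 1 := by
      simpa [show (2 : Fin 3) - 1 = 1 by decide] using habsW 1 2
    have hxx : x * (starRingEnd ℂ) x = (((r 0 : ℝ)) : ℂ) ^ 2 := by
      rw [Complex.mul_conj, ← Complex.sq_norm, habsx]; push_cast; ring
    have hyy : y * (starRingEnd ℂ) y = (((r 1 : ℝ)) : ℂ) ^ 2 := by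
      rw [Complex.mul_conj, ← Complex.sq_norm, habsy]; push_cast; ring
    have hxne : x ≠ 0 := by
      intro h
      exact pow_ne_zero 2 (hR 0) (by rw [← hxx, h, zero_mul])
    have hyne : y ≠ 0 := by
      intro h
      exact pow_ne_zero 2 (hR 1) (by rw [← hyy, h, zero_mul])
    have hwx : wv = x := mul_left_cancel₀ (hR 2) (by linear_combination E3 - E2)
    have hE1y : ((r 2 : ℝ) : ℂ) * y = -(((r 0 : ℝ) : ℂ) * ((r 2 : ℝ) : ℂ) + ((r 1 : ℝ) : ℂ) * x) := by
      linear_combination E1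
    have hE2z : ((r 1 : ℝ) : ℂ) * z = -(((r 0 : ℝ) : ℂ) * ((r 1 : ℝ) : ℂ) + ((r 2 : ℝ) : ℂ) * x) := by
      linear_combination E2
    have hE1yc : ((r 2 : ℝ) : ℂ) * (starRingEnd ℂ) y
        = -(((r 0 : ℝ) : ℂ) * ((r 2 : ℝ) : ℂ) + ((r 1 : ℝ) : ℂ) * (starRingEnd ℂ) x) := by
      have h := congrArg (starRingEnd ℂ) hE1y
      simpa [_root_.map_mul, map_add, map_neg, Complex.conj_ofReal] using h
    have hS : ((r 0 : ℝ) : ℂ) * ((r 1 : ℝ) : ℂ) * ((r 2 : ℝ) : ℂ) * (x + (starRingEnd ℂ) x)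
        = (((r 1 : ℝ)) : ℂ) ^ 2 * (((r 2 : ℝ)) : ℂ) ^ 2 - (((r 0 : ℝ)) : ℂ) ^ 2 * (((r 2 : ℝ)) : ℂ) ^ 2
          - (((r 0 : ℝ)) : ℂ) ^ 2 * (((r 1 : ℝ)) : ℂ) ^ 2 := by
      have h : (((r 0 : ℝ) : ℂ) * ((r 2 : ℝ) : ℂ) + ((r 1 : ℝ) : ℂ) * x)
          * (((r 0 : ℝ) : ℂ) * ((r 2 : ℝ) : ℂ) + ((r 1 : ℝ) : ℂ) * (starRingEnd ℂ) x)
          = (((r 2 : ℝ)) : ℂ) ^ 2 * (((r 1 : ℝ)) : ℂ) ^ 2 := by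
        calc (((r 0 : ℝ) : ℂ) * ((r 2 : ℝ) : ℂ) + ((r 1 : ℝ) : ℂ) * x)
            * (((r 0 : ℝ) : ℂ) * ((r 2 : ℝ) : ℂ) + ((r 1 : ℝ) : ℂ) * (starRingEnd ℂ) x)
            = (((r 2 : ℝ) : ℂ) * y) * (((r 2 : ℝ) : ℂ) * (starRingEnd ℂ) y) := by
              rw [hE1y, hE1yc]; ring
          _ = (((r 2 : ℝ)) : ℂ) ^ 2 * (y * (starRingEnd ℂ) y) := by ring
          _ = (((r 2 : ℝ)) : ℂ) ^ 2 * (((r 1 : ℝ)) : ℂ) ^ 2 := by rw [hyy]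
      linear_combination h - (((r 1 : ℝ)) : ℂ) ^ 2 * hxx
    have hyz : ((r 0 : ℝ) : ℂ) * (y * z) = ((r 1 : ℝ) : ℂ) * (((r 2 : ℝ) : ℂ) * x) := by
      refine mul_left_cancel₀ (mul_ne_zero (hR 1) (hR 2)) ?_
      calc ((r 1 : ℝ) : ℂ) * ((r 2 : ℝ) : ℂ) * (((r 0 : ℝ) : ℂ) * (y * z))
          = ((r 0 : ℝ) : ℂ) * ((((r 2 : ℝ) : ℂ) * y) * ((((r 1 : ℝ)) : ℂ) * z)) := by ring
        _ = ((r 0 : ℝ) : ℂ) * ((-(((r 0 : ℝ) : ℂ) * ((r 2 : ℝ) : ℂ) + ((r 1 : ℝ) : ℂ) * x))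
            * (-(((r 0 : ℝ) : ℂ) * ((r 1 : ℝ) : ℂ) + ((r 2 : ℝ) : ℂ) * x))) := by
              rw [hE1y, hE2z]
        _ = ((r 1 : ℝ) : ℂ) * ((r 2 : ℝ) : ℂ) * (((r 1 : ℝ) : ℂ) * (((r 2 : ℝ) : ℂ) * x)) := by
              linear_combination x * hS - ((r 0 : ℝ) : ℂ) * ((r 1 : ℝ) : ℂ) * ((r 2 : ℝ) : ℂ) * hxx
    -- the cube root
    set t : ℂ := x * y / (((r 0 : ℝ) : ℂ) * ((r 1 : ℝ) : ℂ)) with htd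
    have htne : t ≠ 0 :=
      div_ne_zero (mul_ne_zero hxne hyne) (mul_ne_zero (hR 0) (hR 1))
    set ε : ℂ := Complex.exp (Complex.log t / 3) with hεd
    have hεne : ε ≠ 0 := Complex.exp_ne_zero _
    have hε3 : ε ^ 3 = t := by
      rw [hεd, ← Complex.exp_nat_mul,
        show ((3 : ℕ) : ℂ) * (Complex.log t / 3) = Complex.log t by push_cast; ring]
      exact Complex.exp_log htne
    have habst : ‖t‖ = 1 := by
      rw [htd, norm_div, norm_mul, norm_mul, habsx, habsy, Complex.norm_real, Real.norm_eq_abs,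
        Complex.norm_real, Real.norm_eq_abs, abs_of_pos h0p, abs_of_pos h1p,
        div_self (ne_of_gt (mul_pos h0p h1p))]
    have habsε : ‖ε‖ = 1 := by
      rw [hεd, Complex.norm_exp,
        show Complex.log t / 3 = Complex.log t / ((3 : ℝ) : ℂ) by norm_num,
        Complex.div_ofReal_re, Complex.log_re, habst, Real.log_one, zero_div, Real.exp_zero]
    have hεconj : (starRingEnd ℂ) ε = ε⁻¹ := (inv_eq_of_mul_eq_one_right (unimod habsε)).symm
    set η : ℂ := x / (((r 0 : ℝ) : ℂ) * ε) with hηd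
    have hηne : η ≠ 0 := div_ne_zero hxne (mul_ne_zero (hR 0) hεne)
    have habsη : ‖η‖ = 1 := by
      rw [hηd, norm_div, norm_mul, habsx, Complex.norm_real, Real.norm_eq_abs, habsε, abs_of_pos h0p,
        mul_one, div_self (ne_of_gt h0p)]
    have hηconj : (starRingEnd ℂ) η = η⁻¹ := (inv_eq_of_mul_eq_one_right (unimod habsη)).symm
    have hcube : ((r 0 : ℝ) : ℂ) * ((r 1 : ℝ) : ℂ) * ε ^ 3 = x * y := by
      rw [hε3, htd]
      field_simp
      exact div_self (mul_ne_zero (hR 0) (hR 1))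
    set u : Fin 3 → ℂ := ![1, ε⁻¹, η⁻¹] with hud
    set v : Fin 3 → ℂ := ![1, η, ε] with hvd
    have u0 : u 0 = 1 := by simp [hud]
    have u1 : u 1 = ε⁻¹ := by simp [hud]
    have u2 : u 2 = η⁻¹ := by simp [hud]
    have v0 : v 0 = 1 := by simp [hvd]
    have v1 : v 1 = η := by simp [hvd]
    have v2 : v 2 = ε := by simp [hvd]
    have hucomp : ∀ i, ‖u i * p i‖ = 1 := by
      intro i
      rw [norm_mul, hpu, mul_one]
      fin_cases i <;> simp [hud, map_inv₀, habsε, habsη]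
    have hvcomp : ∀ j, ‖v j * q j‖ = 1 := by
      intro j
      rw [norm_mul, hqu, mul_one]
      fin_cases j <;> simp [hvd, habsε, habsη]
    refine ⟨Matrix.diagonal (fun i => u i * p i), Matrix.diagonal (fun j => v j * q j),
      ((r 0 : ℝ) : ℂ), ((r 2 : ℝ) : ℂ) * ε⁻¹, ((r 1 : ℝ) : ℂ) * η⁻¹,
      Matrix.isDiag_diagonal _, diag_mem _ hucomp, Matrix.isDiag_diagonal _, diag_mem _ hvcomp,
      ?_⟩
    have hsplit : Matrix.diagonal (fun i => u i * p i) * V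
          * (Matrix.diagonal (fun j => v j * q j))ᴴ
        = Matrix.diagonal u * W * (Matrix.diagonal v)ᴴ := by
      rw [hWdef, ← Matrix.diagonal_mul_diagonal u p, ← Matrix.diagonal_mul_diagonal v q,
        Matrix.conjTranspose_mul]
      simp only [Matrix.mul_assoc]
    have G00 : u 0 * W 0 0 * (starRingEnd ℂ) (v 0) = ((r 0 : ℝ) : ℂ) := by
      rw [u0, v0, w00, _root_.map_one, one_mul, mul_one]
    have G01 : u 0 * W 0 1 * (starRingEnd ℂ) (v 1) = ((r 1 : ℝ) : ℂ) * η⁻¹ := by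
      rw [u0, v1, w01, one_mul, hηconj]
    have G02 : u 0 * W 0 2 * (starRingEnd ℂ) (v 2) = ((r 2 : ℝ) : ℂ) * ε⁻¹ := by
      rw [u0, v2, w02, one_mul, hεconj]
    have G10 : u 1 * W 1 0 * (starRingEnd ℂ) (v 0) = ((r 2 : ℝ) : ℂ) * ε⁻¹ := by
      rw [u1, v0, w10, _root_.map_one, mul_one]; ring
    have G11 : u 1 * x * (starRingEnd ℂ) (v 1) = ((r 0 : ℝ) : ℂ) := by
      rw [u1, v1, hηconj, hηd]
      field_simp
    have G12 : u 1 * y * (starRingEnd ℂ) (v 2) = ((r 1 : ℝ) : ℂ) * η⁻¹ := by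
      rw [u1, v2, hεconj, hηd]
      field_simp
      linear_combination -hcube
    have G20 : u 2 * W 2 0 * (starRingEnd ℂ) (v 0) = ((r 1 : ℝ) : ℂ) * η⁻¹ := by
      rw [u2, v0, w20, _root_.map_one, mul_one]; ring
    have hkey21 : (((r 0 : ℝ)) : ℂ) ^ 2 * ε ^ 3 * z = ((r 2 : ℝ) : ℂ) * x ^ 2 := by
      refine mul_left_cancel₀ (hR 1) ?_
      linear_combination (((r 0 : ℝ) : ℂ) * z) * hcube + x * hyz
    have G21 : u 2 * z * (starRingEnd ℂ) (v 1) = ((r 2 : ℝ) : ℂ) * ε⁻¹ := by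
      rw [u2, v1, hηconj, hηd]
      field_simp
      linear_combination hkey21
    have G22 : u 2 * wv * (starRingEnd ℂ) (v 2) = ((r 0 : ℝ) : ℂ) := by
      rw [u2, v2, hwx, hεconj, hηd]
      field_simp
    intro i j
    rw [hsplit, tri_apply]
    fin_cases i <;> fin_cases j
    · rw [if_pos (by decide)]; exact G00
    · rw [if_neg (by decide), if_pos (by decide)]; exact G01
    · rw [if_neg (by decide), if_neg (by decide)]; exact G02
    · rw [if_neg (by decide), if_neg (by decide)]; exact G10
    · rw [if_pos (by decide)]; exact G11
    · rw [if_neg (by decide), if_pos (by decide)]; exact G12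
    · rw [if_neg (by decide), if_pos (by decide)]; exact G20
    · rw [if_neg (by decide), if_neg (by decide)]; exact G21
    · rw [if_pos (by decide)]; exact G22
  · -- degenerate case: some r is zero
    have horth : V 0 0 * (starRingEnd ℂ) (V 1 0) + V 0 1 * (starRingEnd ℂ) (V 1 1)
        + V 0 2 * (starRingEnd ℂ) (V 1 2) = 0 := by
      have h : (V * Vᴴ) 0 1 = (1 : Matrix (Fin 3) (Fin 3) ℂ) 0 1 := by rw [hVV]
      simp only [Matrix.mul_apply, Fin.sum_univ_three, Matrix.conjTranspose_apply] at h
      simp only [show ∀ z : ℂ, star z = (starRingEnd ℂ) z from fun z => rfl] at h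
      rwa [Matrix.one_apply_ne (by decide)] at h
    have hzero : r 0 = 0 ∨ r 1 = 0 ∨ r 2 = 0 := by
      rcases eq_or_lt_of_le (hr 0) with h0 | h0
      · exact Or.inl h0.symm
      rcases eq_or_lt_of_le (hr 1) with h1 | h1
      · exact Or.inr (Or.inl h1.symm)
      rcases eq_or_lt_of_le (hr 2) with h2 | h2
      · exact Or.inr (Or.inr h2.symm)
      exact absurd ⟨h0, h1, h2⟩ hA
    -- show that two of the r's vanish
    have htwo : (r 1 = 0 ∧ r 2 = 0) ∨ (r 0 = 0 ∧ r 2 = 0) ∨ (r 0 = 0 ∧ r 1 = 0) := by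
      rcases hzero with h0 | h1 | h2
      · -- r 0 = 0 : V 0 0 = 0 and V 1 1 = 0, so V 0 2 * conj (V 1 2) = 0
        have e1 : V 0 0 = 0 := hvz 0 0 (by simpa using h0)
        have e2 : V 1 1 = 0 := hvz 1 1 (by simpa using h0)
        have : V 0 2 * (starRingEnd ℂ) (V 1 2) = 0 := by
          rw [e1, e2] at horth; simpa using horth
        rcases mul_eq_zero.mp this with h | h
        · refine Or.inr (Or.inl ⟨h0, ?_⟩)
          have := hzr 0 2 h
          simpa using this
        · refine Or.inr (Or.inr ⟨h0, ?_⟩)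
          have := hzr 1 2 (by simpa using h)
          simpa [show (2 : Fin 3) - 1 = 1 by decide] using this
      · -- r 1 = 0 : V 0 1 = 0 and V 1 2 = 0, so V 0 0 * conj (V 1 0) = 0
        have e1 : V 0 1 = 0 := hvz 0 1 (by simpa using h1)
        have e2 : V 1 2 = 0 := hvz 1 2 (by simpa [show (2 : Fin 3) - 1 = 1 by decide] using h1)
        have : V 0 0 * (starRingEnd ℂ) (V 1 0) = 0 := by
          rw [e1, e2] at horth; simpa using horth
        rcases mul_eq_zero.mp this with h | h
        · refine Or.inr (Or.inr ⟨?_, h1⟩)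
          simpa using hzr 0 0 h
        · refine Or.inl ⟨h1, ?_⟩
          have := hzr 1 0 (by simpa using h)
          simpa [show (0 : Fin 3) - 1 = 2 by decide] using this
      · -- r 2 = 0 : V 1 0 = 0 and V 0 2 = 0, so V 0 1 * conj (V 1 1) = 0
        have e1 : V 1 0 = 0 := hvz 1 0 (by simpa [show (0 : Fin 3) - 1 = 2 by decide] using h2)
        have e2 : V 0 2 = 0 := hvz 0 2 (by simpa using h2)
        have : V 0 1 * (starRingEnd ℂ) (V 1 1) = 0 := by
          rw [e1, e2] at horth; simpa using horth
        rcases mul_eq_zero.mp this with h | h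
        · refine Or.inl ⟨?_, h2⟩
          simpa using hzr 0 1 h
        · refine Or.inr (Or.inl ⟨?_, h2⟩)
          have := hzr 1 1 (by simpa using h)
          simpa using this
    -- in each case apply aux_perm
    rcases htwo with ⟨ha, hb⟩ | ⟨ha, hb⟩ | ⟨ha, hb⟩
    · -- r 1 = r 2 = 0, r 0 = 1 : diagonal k = 0
      have hone : r 0 = 1 := by nlinarith [hr 0]
      apply aux_perm V 0
      · intro i j h
        apply hvz
        revert h
        generalize j - i = d
        intro h
        fin_cases d <;> simp_all
      · intro i
        rw [hmod, add_sub_cancel_left, hone]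
    · -- r 0 = r 2 = 0, r 1 = 1 : diagonal k = 1
      have hone : r 1 = 1 := by nlinarith [hr 1]
      apply aux_perm V 1
      · intro i j h
        apply hvz
        revert h
        generalize j - i = d
        intro h
        fin_cases d <;> simp_all
      · intro i
        rw [hmod, add_sub_cancel_left, hone]
    · -- r 0 = r 1 = 0, r 2 = 1 : diagonal k = 2
      have hone : r 2 = 1 := by nlinarith [hr 2]
      apply aux_perm V 2
      · intro i j h
        apply hvz
        revert h
        generalize j - i = d
        intro h
        fin_cases d <;> simp_all
      · intro i
        rw [hmod, add_sub_cancel_left, hone]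
end

section
/- Let B₁, B₂, B₃ be 3×3 unitary matrices such that B₂†B₁ = Σ_{i=0}^{2} ω^i e_i e_i† and B₃†B₂ = Σ_{j=0}^{2} ω^j f_j f_j†, where {e_i} and {f_j} are orthonormal bases of ℂ³, ω = e^{2πi/3}, and suppose there exist complex constants A₀, A₁, A₂ with ⟨e_i, f_j⟩ = A_{(j−i) mod 3} for all i, j. Define u_x = (1/√3) Σ_{i=0}^{2} ω^{ix} e_i for x ∈ {0,1,2}. Then for every x the three vectors B₁u_x, B₂u_x, B₃u_x are pairwise orthogonal. -/
open Matrix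

lemma omega_pow_three : ω ^ 3 = 1 := by
  rw [ω, ← Complex.exp_nat_mul]
  rw [show (3:ℕ) * (2 * (Real.pi:ℂ) * Complex.I / 3) = 2 * Real.pi * Complex.I by push_cast; ring]
  exact Complex.exp_two_pi_mul_I

lemma omega_ne_one : ω ≠ 1 := by
  rw [ω]
  intro h
  rw [Complex.exp_eq_one_iff] at h
  obtain ⟨n, hn⟩ := h
  have hne : (2 * (Real.pi:ℂ) * Complex.I) ≠ 0 := by
    apply mul_ne_zero (mul_ne_zero two_ne_zero _) Complex.I_ne_zero
    exact_mod_cast Real.pi_ne_zero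
  have h2 : ((n:ℂ) * 3 - 1) * (2 * (Real.pi:ℂ) * Complex.I) = 0 := by
    linear_combination (-3 : ℂ) * hn
  have h1 : (n : ℂ) * 3 = 1 := by
    rcases mul_eq_zero.mp h2 with h' | h'
    · exact sub_eq_zero.mp h'
    · exact absurd h' hne
  have h2' : (n : ℤ) * 3 = 1 := by exact_mod_cast h1
  omega

lemma omega_sum : 1 + ω + ω ^ 2 = 0 := by
  have h : (ω - 1) * (1 + ω + ω ^ 2) = 0 := by linear_combination omega_pow_three
  rcases mul_eq_zero.mp h with h' | h'
  · exact absurd (sub_eq_zero.mp h') omega_ne_one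
  · exact h'

lemma star_omega : star ω = ω ^ 2 := by
  have hc : (starRingEnd ℂ) (2 * Real.pi * Complex.I / 3) = -(2 * Real.pi * Complex.I / 3) := by
    simp [map_div₀, Complex.conj_I, Complex.conj_ofNat]
    ring
  have h1 : star ω * ω = 1 := by
    have h0 : star ω = Complex.exp (-(2 * Real.pi * Complex.I / 3)) := by
      rw [ω, show (star (Complex.exp (2 * ↑Real.pi * Complex.I / 3)) : ℂ)
        = (starRingEnd ℂ) (Complex.exp (2 * ↑Real.pi * Complex.I / 3)) from rfl,
        ← Complex.exp_conj, hc]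
    rw [h0, ω, ← Complex.exp_add]
    simp
  calc star ω = star ω * (ω * ω ^ 2) := by
        rw [show ω * ω^2 = ω^3 by ring, omega_pow_three, mul_one]
  _ = ω ^ 2 := by rw [← mul_assoc, h1, one_mul]

lemma inner_red (M N : Matrix (Fin 3) (Fin 3) ℂ) (v w : Fin 3 → ℂ) :
    ∑ t, star (M.mulVec v t) * (N.mulVec w t) = star v ⬝ᵥ (Mᴴ * N) *ᵥ w := by
  have : ∑ t, star (M.mulVec v t) * (N.mulVec w t) = star (M *ᵥ v) ⬝ᵥ (N *ᵥ w) := rfl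
  rw [this, star_mulVec, ← dotProduct_mulVec, mulVec_mulVec]

lemma conj_quad (M : Matrix (Fin 3) (Fin 3) ℂ) (v : Fin 3 → ℂ) :
    star v ⬝ᵥ Mᴴ *ᵥ v = star (star v ⬝ᵥ M *ᵥ v) := by
  simp only [dotProduct, mulVec, conjTranspose_apply, Fin.sum_univ_three, star_add, star_mul',
    star_star, Pi.star_apply]
  ring

lemma quad_sum (v w : Fin 3 → ℂ) (g h : Fin 3 → Fin 3 → ℂ) (coef : Fin 3 → ℂ) :
    star v ⬝ᵥ (∑ i, coef i • vecMulVec (g i) (fun t => star (h i t))) *ᵥ w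
      = ∑ i, coef i * (star v ⬝ᵥ g i) * (∑ t, star (h i t) * w t) := by
  simp only [dotProduct, mulVec, vecMulVec_apply, Matrix.sum_apply, Matrix.smul_apply,
    smul_eq_mul, Pi.star_apply, Fin.sum_univ_three]
  ring

lemma dot_star (g v : Fin 3 → ℂ) : star v ⬝ᵥ g = star (∑ t, star (g t) * v t) := by
  simp only [dotProduct, Fin.sum_univ_three, star_add, star_mul', star_star, Pi.star_apply]
  ring

lemma sum_dot (φ : Fin 3 → ℂ) (g : Fin 3 → Fin 3 → ℂ) (z : Fin 3 → ℂ) (c : ℂ) :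
    ∑ t, z t * (c * ∑ k, φ k * g k t) = ∑ k, c * φ k * ∑ t, z t * g k t := by
  simp only [Fin.sum_univ_three]
  ring

/-- Let `B₁, B₂, B₃` (indexed `B 0, B 1, B 2`) be `3 × 3` unitaries with
`B₂†B₁ = ∑ ωⁱ eᵢeᵢ†` and `B₃†B₂ = ∑ ωʲ fⱼfⱼ†` for orthonormal bases `{eᵢ}, {fⱼ}`,
and suppose `⟨eᵢ, fⱼ⟩ = A_{(j−i) mod 3}` for constants `A₀, A₁, A₂`. With
`u_x = (1/√3) ∑ ω^{ix} eᵢ`, the vectors `B₁u_x, B₂u_x, B₃u_x` are pairwise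
orthogonal for every `x`. -/
theorem stmt_9 (B : Fin 3 → Matrix (Fin 3) (Fin 3) ℂ)
    (hB : ∀ i, B i ∈ Matrix.unitaryGroup (Fin 3) ℂ)
    (e f : Fin 3 → (Fin 3 → ℂ))
    (he : ∀ i j, ∑ t, star (e i t) * e j t = if i = j then 1 else 0)
    (hf : ∀ i j, ∑ t, star (f i t) * f j t = if i = j then 1 else 0)
    (hB21 : (B 1)ᴴ * B 0 =
      ∑ i : Fin 3, ω ^ (i : ℕ) • Matrix.vecMulVec (e i) (fun t => star (e i t)))
    (hB32 : (B 2)ᴴ * B 1 =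
      ∑ j : Fin 3, ω ^ (j : ℕ) • Matrix.vecMulVec (f j) (fun t => star (f j t)))
    (A : Fin 3 → ℂ)
    (hA : ∀ i j, (∑ t, star (e i t) * f j t) = A (j - i))
    (u : Fin 3 → (Fin 3 → ℂ))
    (hu : ∀ x, u x = (((Real.sqrt 3)⁻¹ : ℝ) : ℂ) •
      ∑ i : Fin 3, ω ^ ((i : ℕ) * (x : ℕ)) • e i) :
    ∀ x : Fin 3, ∀ i j, i ≠ j →
      ∑ t, star ((B i).mulVec (u x) t) * ((B j).mulVec (u x) t) = 0 := by
  intro x i j hij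
  set c : ℂ := (((Real.sqrt 3)⁻¹ : ℝ) : ℂ) with hcdef
  set y : ℂ := ω ^ (x : ℕ) with hydef
  have hω3 : ω ^ 3 = 1 := omega_pow_three
  have hωsum : 1 + ω + ω ^ 2 = 0 := omega_sum
  have hy3 : y ^ 3 = 1 := by rw [hydef, ← pow_mul, mul_comm, pow_mul, hω3, one_pow]
  have hys : star y = y ^ 2 := by
    rw [hydef, star_pow, star_omega, ← pow_mul, mul_comm, pow_mul]
  have hcs : star c = c := by rw [hcdef]; exact Complex.conj_ofReal _
  have hpow : ∀ k : ℕ, ω ^ (k * (x:ℕ)) = y ^ k := by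
    intro k; rw [hydef, ← pow_mul, mul_comm]
  -- u expanded
  have hux : ∀ t, u x t = c * ∑ k : Fin 3, ω ^ ((k:ℕ) * (x:ℕ)) * e k t := by
    intro t
    rw [hu]
    simp [Finset.sum_apply, Finset.mul_sum]
  -- coefficients
  have ha : ∀ i : Fin 3, (∑ t, star (e i t) * u x t) = c * y ^ (i:ℕ) := by
    intro i
    calc ∑ t, star (e i t) * u x t
        = ∑ t, star (e i t) * (c * ∑ k : Fin 3, ω ^ ((k:ℕ) * (x:ℕ)) * e k t) := by
          simp only [hux]
      _ = ∑ k : Fin 3, c * ω ^ ((k:ℕ) * (x:ℕ)) * ∑ t, star (e i t) * e k t := sum_dot _ _ _ _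
      _ = c * ω ^ ((i:ℕ) * (x:ℕ)) := by
          simp only [he, mul_ite, mul_one, mul_zero, Finset.sum_ite_eq, Finset.mem_univ, if_true]
      _ = c * y ^ (i:ℕ) := by rw [hpow]
  have hfe : ∀ (k j : Fin 3), (∑ t, star (f j t) * e k t) = star (A (j - k)) := by
    intro k j
    rw [← hA k j]
    simp only [star_sum, star_mul', star_star]
    exact Finset.sum_congr rfl fun t _ => by ring
  have hd : ∀ j : Fin 3, (∑ t, star (f j t) * u x t)
      = c * ∑ k : Fin 3, y ^ (k:ℕ) * star (A (j - k)) := by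
    intro j
    calc ∑ t, star (f j t) * u x t
        = ∑ t, star (f j t) * (c * ∑ k : Fin 3, ω ^ ((k:ℕ) * (x:ℕ)) * e k t) := by
          simp only [hux]
      _ = ∑ k : Fin 3, c * ω ^ ((k:ℕ) * (x:ℕ)) * ∑ t, star (f j t) * e k t := sum_dot _ _ _ _
      _ = c * ∑ k : Fin 3, y ^ (k:ℕ) * star (A (j - k)) := by
          simp only [hfe, hpow, Finset.mul_sum]
          exact Finset.sum_congr rfl fun k _ => by ring
  
  -- Fin 3 value simp set
  have hfin : ((0:Fin 3) - 1 = 2 ∧ (0:Fin 3) - 2 = 1 ∧ (1:Fin 3) - 2 = 2 ∧ (2:Fin 3) - 1 = 1) := by decide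
  set d0 : ℂ := ∑ t, star (f 0 t) * u x t with hd0def
  have hd1 : (∑ t, star (f 1 t) * u x t) = y * d0 := by
    rw [hd0def, hd 0, hd 1]
    simp only [Fin.sum_univ_three, Fin.val_zero, Fin.val_one, Fin.val_two, pow_zero, pow_one,
      one_mul, sub_self, sub_zero,
      show (0:Fin 3) - 1 = 2 from rfl, show (0:Fin 3) - 2 = 1 from rfl,
      show (1:Fin 3) - 2 = 2 from rfl, show (2:Fin 3) - 1 = 1 from rfl]
    linear_combination (- c * star (A 1)) * hy3
  have hd2 : (∑ t, star (f 2 t) * u x t) = y * (y * d0) := by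
    rw [← hd1, hd 1, hd 2]
    simp only [Fin.sum_univ_three, Fin.val_zero, Fin.val_one, Fin.val_two, pow_zero, pow_one,
      one_mul, sub_self, sub_zero,
      show (0:Fin 3) - 1 = 2 from rfl, show (0:Fin 3) - 2 = 1 from rfl,
      show (1:Fin 3) - 2 = 2 from rfl, show (2:Fin 3) - 1 = 1 from rfl]
    linear_combination (- c * star (A 2)) * hy3
  have h1 : B 1 * (B 1)ᴴ = 1 := by
    have h := Matrix.mem_unitaryGroup_iff.mp (hB 1)
    rwa [Matrix.star_eq_conjTranspose] at h
  have hQP : (B 2)ᴴ * B 0 =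
      (∑ j : Fin 3, ω ^ (j:ℕ) • Matrix.vecMulVec (f j) (fun t => star (f j t))) *
      (∑ i : Fin 3, ω ^ (i:ℕ) • Matrix.vecMulVec (e i) (fun t => star (e i t))) := by
    rw [← hB21, ← hB32, mul_assoc, ← mul_assoc (B 1), h1, one_mul]
  -- key scalar identities
  have key10 : star (u x) ⬝ᵥ ((B 1)ᴴ * B 0) *ᵥ u x = 0 := by
    rw [hB21, quad_sum]
    simp only [dot_star, ha, Fin.sum_univ_three, Fin.val_zero, Fin.val_one, Fin.val_two,
      pow_zero, pow_one, star_mul', star_pow, star_one, hys, hcs, mul_one, one_mul]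
    linear_combination (c^2) * hωsum + (ω*c^2) * hy3 + (ω^2*c^2*(y^3+1)) * hy3
  have key21 : star (u x) ⬝ᵥ ((B 2)ᴴ * B 1) *ᵥ u x = 0 := by
    rw [hB32, quad_sum, Fin.sum_univ_three]
    simp only [dot_star]
    rw [hd2, hd1]
    simp only [star_mul', hys, hcs, Fin.val_zero, Fin.val_one, Fin.val_two, pow_zero, pow_one,
      one_mul]
    linear_combination (star d0 * d0) * hωsum + (ω * star d0 * d0) * hy3
      + (ω^2 * star d0 * d0 * (y^3+1)) * hy3
  have hPg : ∀ jj : Fin 3, (∑ t, star (f jj t) *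
      ((∑ i : Fin 3, ω ^ (i:ℕ) • Matrix.vecMulVec (e i) (fun t => star (e i t))) *ᵥ u x) t)
      = ∑ i : Fin 3, ω ^ (i:ℕ) * star (A (jj - i)) * (c * y ^ (i:ℕ)) := by
    intro jj
    have hr : (∑ t, star (f jj t) *
        ((∑ i : Fin 3, ω ^ (i:ℕ) • Matrix.vecMulVec (e i) (fun t => star (e i t))) *ᵥ u x) t)
        = star (f jj) ⬝ᵥ ((∑ i : Fin 3, ω ^ (i:ℕ) • Matrix.vecMulVec (e i) (fun t => star (e i t))) *ᵥ u x) := rfl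
    rw [hr, quad_sum]
    apply Finset.sum_congr rfl
    intro i _
    have h2 : star (f jj) ⬝ᵥ e i = ∑ t, star (f jj t) * e i t := rfl
    rw [h2, hfe, ha]
  have key20 : star (u x) ⬝ᵥ ((B 2)ᴴ * B 0) *ᵥ u x = 0 := by
    rw [hQP, ← mulVec_mulVec, quad_sum, Fin.sum_univ_three]
    simp only [dot_star, hPg]
    rw [hd2, hd1, ← hd0def]
    simp only [star_mul', hys, hcs, Fin.sum_univ_three, Fin.val_zero, Fin.val_one, Fin.val_two,
      pow_zero, pow_one, one_mul, mul_one, sub_self, sub_zero,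
      show (0:Fin 3) - 1 = 2 from rfl, show (0:Fin 3) - 2 = 1 from rfl,
      show (1:Fin 3) - 2 = 2 from rfl, show (2:Fin 3) - 1 = 1 from rfl]
    linear_combination
      (star d0 * c * (star (A 0) + star (A 1) * y^2 + star (A 2) * ω * y)) * hωsum
      + (star d0 * c * (star (A 0) * (ω^2 + ω^4 * (y^3+1)) + star (A 1) * y^2 * ω^3
          + star (A 2) * ω * y * (ω^2 + ω))) * hy3
      + (star d0 * c * (star (A 0) * ω + star (A 1) * y^2)) * hω3
  -- assemble
  have cq : ∀ M : Matrix (Fin 3) (Fin 3) ℂ, ∀ N : Matrix (Fin 3) (Fin 3) ℂ,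
      N = Mᴴ → star (u x) ⬝ᵥ M *ᵥ u x = 0 → star (u x) ⬝ᵥ N *ᵥ u x = 0 := by
    intro M N hN hM
    rw [hN, conj_quad, hM, star_zero]
  have hi3 : ∀ k : Fin 3, k = 0 ∨ k = 1 ∨ k = 2 := by decide
  have hct : ∀ M N : Matrix (Fin 3) (Fin 3) ℂ, Mᴴ * N = (Nᴴ * M)ᴴ := by
    intro M N
    rw [conjTranspose_mul, conjTranspose_conjTranspose]
  rcases hi3 i with rfl | rfl | rfl <;> rcases hi3 j with rfl | rfl | rfl
  · exact absurd rfl hij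
  · rw [inner_red]; exact cq _ _ (hct _ _) key10
  · rw [inner_red]; exact cq _ _ (hct _ _) key20
  · rw [inner_red]; exact key10
  · exact absurd rfl hij
  · rw [inner_red]; exact cq _ _ (hct _ _) key21
  · rw [inner_red]; exact key20
  · rw [inner_red]; exact key21
  · exact absurd rfl hij
end

section
/- Let B₁, ..., B_k be n×n unitary matrices with Tr(B_i† B_j) = 0 for all i ≠ j. Suppose that for each pair i < j the matrix B_i†B_j has an orthonormal eigenbasis {e^{(ij)}_1, ..., e^{(ij)}_n}, and suppose there exists an orthonormal basis {b_1, ..., b_n} of ℂ^n that is a common unbiased basis for all these eigenbases, i.e., |⟨b_t, e^{(ij)}_s⟩|² = 1/n for all t, s and all pairs i < j. Then for every t and all i ≠ j, the vectors B_i b_t and B_j b_t are orthogonal: ⟨b_t, B_i†B_j b_t⟩ = 0. (This is the content of the result that the k maximally entangled states (I ⊗ B_i)|ME_n⟩ can then be perfectly distinguished by LOCC.) -/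
open Matrix

/-- Completeness relation: the rows of a square matrix with orthonormal rows
also have orthonormal columns. -/
lemma aux_complete (n : ℕ) (e : Fin n → (Fin n → ℂ))
    (heON : ∀ s t, ∑ u, star (e s u) * e t u = if s = t then 1 else 0) :
    ∀ u v, ∑ s, star (e s u) * e s v = if u = v then 1 else 0 := by
  classical
  set E : Matrix (Fin n) (Fin n) ℂ := Matrix.of e with hE
  have hE1 : E * Eᴴ = 1 := by
    ext s t
    have h := heON t s
    simp only [Matrix.mul_apply, Matrix.conjTranspose_apply, Matrix.one_apply, hE,
      Matrix.of_apply]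
    rw [show (if t = s then (1:ℂ) else 0) = (if s = t then (1:ℂ) else 0) from by
      simp [eq_comm]] at h
    rw [← h]
    exact Finset.sum_congr rfl fun u _ => by ring
  have hE2 : Eᴴ * E = 1 := mul_eq_one_comm.mp hE1
  intro u v
  have h := congrFun (congrFun hE2 u) v
  simpa only [Matrix.mul_apply, Matrix.conjTranspose_apply, Matrix.one_apply, hE,
    Matrix.of_apply] using h

/-- Key lemma: if `M` is traceless with orthonormal eigenbasis `e` and `b` is
unbiased with respect to `e`, then `⟨b, M b⟩ = 0`. -/
lemma aux_main (n : ℕ) (M : Matrix (Fin n) (Fin n) ℂ)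
    (htr : M.trace = 0)
    (e : Fin n → (Fin n → ℂ))
    (heON : ∀ s t, ∑ u, star (e s u) * e t u = if s = t then 1 else 0)
    (heig : ∀ s, ∃ μ : ℂ, M.mulVec (e s) = μ • e s)
    (b : Fin n → ℂ)
    (hub : ∀ s, ‖∑ u, star (b u) * e s u‖ ^ 2 = 1 / n) :
    ∑ u, star (b u) * M.mulVec b u = 0 := by
  classical
  have hcomp := aux_complete n e heON
  choose μ hμ using heig
  set d : Fin n → ℂ := fun s => ∑ u, star (b u) * e s u with hd
  have hds : ∀ s, star (d s) * d s = (1 / n : ℂ) := by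
    intro s
    have h := hub s
    have h2 : star (d s) * d s = ((‖d s‖ ^ 2 : ℝ) : ℂ) := by
      rw [Complex.sq_norm, mul_comm]
      exact_mod_cast (Complex.mul_conj (d s))
    rw [h2, hd] at *
    rw [h]
    push_cast
    ring
  -- expansion of b in the basis e
  have hbexp : b = ∑ s, star (d s) • e s := by
    funext u
    have hc : ∀ s, star (d s) = ∑ w, b w * star (e s w) := by
      intro s
      rw [hd]
      simp only [star_sum, star_mul', star_star]
      try exact Finset.sum_congr rfl fun w _ => by ring
    calc b u = ∑ w, b w * ∑ s, star (e s w) * e s u := by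
          have hcu : ∀ w, (∑ s, star (e s w) * e s u) = if w = u then 1 else 0 :=
            fun w => hcomp w u
          simp only [hcu, mul_ite, mul_one, mul_zero, Finset.sum_ite_eq',
            Finset.mem_univ, if_true]
      _ = ∑ s, ∑ w, (b w * star (e s w)) * e s u := by
          rw [Finset.sum_comm]
          exact Finset.sum_congr rfl fun w _ => by
            rw [Finset.mul_sum]; exact Finset.sum_congr rfl fun s _ => by ring
      _ = (∑ s, star (d s) • e s) u := by
          simp only [Finset.sum_apply, Pi.smul_apply, smul_eq_mul, hc, Finset.sum_mul]
  -- action of M on b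
  have hMb : M.mulVec b = ∑ s, (star (d s) * μ s) • e s := by
    rw [hbexp, ← Matrix.mulVecLin_apply, map_sum]
    simp only [Matrix.mulVecLin_apply, Matrix.mulVec_smul, hμ, smul_smul]
  -- main computation
  have hS : ∑ u, star (b u) * M.mulVec b u = ∑ s, μ s * (star (d s) * d s) := by
    rw [hMb]
    simp only [Finset.sum_apply, Pi.smul_apply, smul_eq_mul, Finset.mul_sum]
    rw [Finset.sum_comm]
    refine Finset.sum_congr rfl fun s _ => ?_
    rw [hd]
    simp only [Finset.mul_sum]
    exact Finset.sum_congr rfl fun u _ => by ring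
  -- sum of eigenvalues is the trace
  have htrsum : ∑ s, μ s = M.trace := by
    calc ∑ s, μ s = ∑ s, ∑ u, star (e s u) * M.mulVec (e s) u := by
          refine Finset.sum_congr rfl fun s _ => ?_
          rw [hμ]
          simp only [Pi.smul_apply, smul_eq_mul]
          rw [show ∑ u, star (e s u) * (μ s * e s u)
              = μ s * ∑ u, star (e s u) * e s u from by
            rw [Finset.mul_sum]; exact Finset.sum_congr rfl fun u _ => by ring]
          rw [heON s s]
          simp
      _ = ∑ u, ∑ v, M u v * ∑ s, star (e s u) * e s v := by
          rw [Finset.sum_comm]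
          refine Finset.sum_congr rfl fun u _ => ?_
          simp only [Matrix.mulVec, dotProduct, Finset.mul_sum]
          rw [Finset.sum_comm]
          exact Finset.sum_congr rfl fun v _ => Finset.sum_congr rfl fun s _ => by ring
      _ = M.trace := by
          simp only [hcomp, mul_ite, mul_one, mul_zero]
          simp [Matrix.trace, Matrix.diag]
  rw [hS]
  calc ∑ s, μ s * (star (d s) * d s) = ∑ s, μ s * (1 / n : ℂ) := by
        exact Finset.sum_congr rfl fun s _ => by rw [hds]
    _ = (∑ s, μ s) * (1 / n : ℂ) := by rw [Finset.sum_mul]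
    _ = 0 := by rw [htrsum, htr, zero_mul]

/-- Conjugation relation for the quadratic form. -/
lemma aux_star (n : ℕ) (M : Matrix (Fin n) (Fin n) ℂ) (v : Fin n → ℂ) :
    ∑ u, star (v u) * M.mulVec v u
      = star (∑ u, star (v u) * Mᴴ.mulVec v u) := by
  simp only [Matrix.mulVec, dotProduct, Matrix.conjTranspose_apply, star_sum, star_mul',
    star_star, Finset.mul_sum]
  rw [Finset.sum_comm]
  exact Finset.sum_congr rfl fun u _ => Finset.sum_congr rfl fun w _ => by ring

/-- Let `B₁, …, B_k` be `n × n` unitaries with `Tr(Bᵢ† Bⱼ) = 0` for `i ≠ j`. Suppose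
for each pair `i < j` the matrix `Bᵢ†Bⱼ` has an orthonormal eigenbasis `{e^{(ij)}_s}`,
and `{b_t}` is an orthonormal basis with `|⟨b_t, e^{(ij)}_s⟩|² = 1/n` for all `t, s`
and all pairs `i < j` (a common unbiased basis). Then for every `t` and all `i ≠ j`,
the vectors `Bᵢ b_t` and `Bⱼ b_t` are orthogonal: `⟨b_t, Bᵢ†Bⱼ b_t⟩ = 0`. -/
theorem stmt_10 (k n : ℕ) (hk : 0 < k) (hn : 0 < n)
    (B : Fin k → Matrix (Fin n) (Fin n) ℂ)
    (hB : ∀ i, B i ∈ Matrix.unitaryGroup (Fin n) ℂ)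
    (horth : ∀ i j, i ≠ j → ((B i)ᴴ * B j).trace = 0)
    (e : Fin k → Fin k → Fin n → (Fin n → ℂ))
    (heON : ∀ i j, i < j → ∀ s t,
      ∑ u, star (e i j s u) * e i j t u = if s = t then 1 else 0)
    (heig : ∀ i j, i < j → ∀ s, ∃ μ : ℂ,
      ((B i)ᴴ * B j).mulVec (e i j s) = μ • e i j s)
    (b : Fin n → (Fin n → ℂ))
    (hbON : ∀ s t, ∑ u, star (b s u) * b t u = if s = t then 1 else 0)
    (hub : ∀ i j, i < j → ∀ t s,
      ‖∑ u, star (b t u) * e i j s u‖ ^ 2 = 1 / n) :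
    ∀ t, ∀ i j, i ≠ j →
      ∑ u, star (b t u) * ((B i)ᴴ * B j).mulVec (b t) u = 0 := by
  intro t i j hij
  rcases lt_or_gt_of_ne hij with h | h
  · exact aux_main n _ (horth i j hij) (e i j) (heON i j h) (heig i j h) (b t)
      (fun s => hub i j h t s)
  · have h0 : ∑ u, star (b t u) * ((B j)ᴴ * B i).mulVec (b t) u = 0 :=
      aux_main n _ (horth j i (Ne.symm hij)) (e j i) (heON j i h) (heig j i h) (b t)
        (fun s => hub j i h t s)
    have hCT : ((B i)ᴴ * B j)ᴴ = (B j)ᴴ * B i := by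
      simp [Matrix.conjTranspose_mul]
    rw [aux_star, hCT, h0, star_zero]
end

section
/- Let k, n be positive integers, let U₁, ..., U_k be n×n unitary matrices, and let B be an n×n complex matrix with Tr(B†B) = n. Let J be a finite index set, let {X_j}_{j∈J} be n×n complex matrices with Σ_{j∈J} X_j X_j† = I_n, and for each j ∈ J let {E_{j,i}}_{i=1}^{k} be n×n complex matrices with Σ_{i=1}^{k} E_{j,i}† E_{j,i} = I_n. Then Σ_{j∈J} Σ_{i=1}^{k} ‖E_{j,i} U_i B X_j‖_F² ≤ n², where ‖·‖_F denotes the Frobenius norm. (Consequently, the success probability (1/(kn)) Σ_{j,i} ‖E_{j,i} U_i B X_j‖_F² of any one-round LOCC protocol for distinguishing the k equally likely states (I ⊗ U_iB)|ME_n⟩ is at most n/k.) -/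
open Matrix

attribute [local instance] Matrix.frobeniusNormedAddCommGroup Matrix.frobeniusNormedRing

private lemma stmt15_g_norm {n : ℕ} (M : Matrix (Fin n) (Fin n) ℂ) :
    ∑ r, ∑ s, ‖M r s‖ ^ 2 = ‖M‖ ^ 2 := by
  rw [frobenius_norm_def]
  rw [← Real.rpow_natCast _ 2, ← Real.rpow_mul (by positivity)]
  norm_num

private lemma stmt15_g_trace {n : ℕ} (M : Matrix (Fin n) (Fin n) ℂ) :
    ((∑ r, ∑ s, ‖M r s‖ ^ 2 : ℝ) : ℂ) = (Mᴴ * M).trace := by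
  simp [Matrix.trace, Matrix.mul_apply, Matrix.conjTranspose_apply, Matrix.diag]
  rw [Finset.sum_comm]
  congr 1; ext r; congr 1; ext s
  rw [← Complex.ofReal_pow, Complex.sq_norm, ← Complex.normSq_eq_conj_mul_self]

/-- The key estimate behind the bound `n/k` on the success probability of LOCC
discrimination of `k` equally likely states `(I ⊗ UᵢB)|ME_n⟩`: for any POVM data
`{Xⱼ}` with `∑ⱼ XⱼXⱼ† = I` and, for each `j`, `{E_{j,i}}` with `∑ᵢ E_{j,i}†E_{j,i} = I`,
and any `B` with `Tr(B†B) = n`, one has `∑_{j,i} ‖E_{j,i} Uᵢ B Xⱼ‖_F² ≤ n²`. -/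
theorem stmt_15 (k n : ℕ) (hk : 0 < k) (hn : 0 < n)
    (U : Fin k → Matrix (Fin n) (Fin n) ℂ)
    (hU : ∀ i, U i ∈ Matrix.unitaryGroup (Fin n) ℂ)
    (B : Matrix (Fin n) (Fin n) ℂ) (hB : (Bᴴ * B).trace = (n : ℂ))
    (J : Type*) [Fintype J]
    (X : J → Matrix (Fin n) (Fin n) ℂ)
    (hX : ∑ j, X j * (X j)ᴴ = 1)
    (E : J → Fin k → Matrix (Fin n) (Fin n) ℂ)
    (hE : ∀ j, ∑ i, (E j i)ᴴ * E j i = 1) :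
    ∑ j, ∑ i, (∑ r, ∑ s, ‖(E j i * (U i * B) * X j) r s‖ ^ 2) ≤
      (n : ℝ) ^ 2 := by
  set g : Matrix (Fin n) (Fin n) ℂ → ℝ := fun M => ∑ r, ∑ s, ‖M r s‖ ^ 2 with hg
  -- unitary invariance
  have hUinv : ∀ (i : Fin k) (M : Matrix (Fin n) (Fin n) ℂ), g (U i * M) = g M := by
    intro i M
    have h1 : (U i)ᴴ * U i = 1 := by
      have := (Matrix.mem_unitaryGroup_iff'.mp (hU i))
      simpa [Matrix.star_eq_conjTranspose] using this
    have : (((U i * M)ᴴ * (U i * M)).trace) = ((Mᴴ * M).trace) := by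
      rw [Matrix.conjTranspose_mul, Matrix.mul_assoc, ← Matrix.mul_assoc (U i)ᴴ, h1,
        Matrix.one_mul]
    exact_mod_cast (stmt15_g_trace (U i * M)).trans (this.trans (stmt15_g_trace M).symm)
  -- submultiplicativity
  have hsub : ∀ (A C : Matrix (Fin n) (Fin n) ℂ), g (A * C) ≤ g A * g C := by
    intro A C
    simp only [hg, stmt15_g_norm]
    calc ‖A * C‖ ^ 2 ≤ (‖A‖ * ‖C‖) ^ 2 := by
          apply pow_le_pow_left₀ (norm_nonneg _) (frobenius_norm_mul A C)
      _ = ‖A‖ ^ 2 * ‖C‖ ^ 2 := by ring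
  -- ∑ i, g (E j i) = n
  have hEsum : ∀ j, ∑ i, g (E j i) = (n : ℝ) := by
    intro j
    have : ((∑ i, g (E j i) : ℝ) : ℂ) = (n : ℝ) := by
      push_cast [hg]
      calc (∑ i, ((∑ r, ∑ s, (‖(E j i) r s‖ : ℂ) ^ 2)))
          = ∑ i, ((E j i)ᴴ * E j i).trace := by
            refine Finset.sum_congr rfl fun i _ => ?_
            have := stmt15_g_trace (E j i); push_cast at this; exact this
        _ = (∑ i, (E j i)ᴴ * E j i).trace := by rw [Matrix.trace_sum]
        _ = (n : ℂ) := by rw [hE j]; simp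
    exact_mod_cast this
  -- ∑ j, g (B * X j) = n
  have hXsum : ∑ j, g (B * X j) = (n : ℝ) := by
    have : ((∑ j, g (B * X j) : ℝ) : ℂ) = (n : ℂ) := by
      push_cast [hg]
      calc (∑ j, ((∑ r, ∑ s, (‖(B * X j) r s‖ : ℂ) ^ 2)))
          = ∑ j, ((B * X j)ᴴ * (B * X j)).trace := by
            refine Finset.sum_congr rfl fun j _ => ?_
            have := stmt15_g_trace (B * X j); push_cast at this; exact this
        _ = ∑ j, ((Bᴴ * B) * (X j * (X j)ᴴ)).trace := by
            refine Finset.sum_congr rfl fun j _ => ?_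
            rw [Matrix.conjTranspose_mul, Matrix.mul_assoc, Matrix.trace_mul_comm]
            simp only [Matrix.mul_assoc]
        _ = ((Bᴴ * B) * ∑ j, (X j * (X j)ᴴ)).trace := by
            rw [Finset.mul_sum, Matrix.trace_sum]
        _ = (n : ℂ) := by rw [hX, Matrix.mul_one, hB]
    exact_mod_cast this
  calc ∑ j, ∑ i, g (E j i * (U i * B) * X j)
      ≤ ∑ j, ∑ i, g (E j i) * g ((U i * B) * X j) := by
        refine Finset.sum_le_sum fun j _ => Finset.sum_le_sum fun i _ => ?_
        rw [Matrix.mul_assoc]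
        exact hsub _ _
    _ = ∑ j, ∑ i, g (E j i) * g (B * X j) := by
        refine Finset.sum_congr rfl fun j _ => Finset.sum_congr rfl fun i _ => ?_
        rw [Matrix.mul_assoc, hUinv]
    _ = ∑ j, (∑ i, g (E j i)) * g (B * X j) := by
        simp [Finset.sum_mul]
    _ = ∑ j, (n : ℝ) * g (B * X j) := by
        refine Finset.sum_congr rfl fun j _ => ?_; rw [hEsum]
    _ = (n : ℝ) * ∑ j, g (B * X j) := by rw [Finset.mul_sum]
    _ = (n : ℝ) ^ 2 := by rw [hXsum]; ring
end
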